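/- Let F be a linearly ordered field, A and B magnitudes of F, and a, a', b, b' ∈ F with a' ∈ a + A and b' ∈ b + B. Then a'·b' − a·b ∈ a • B + b • A + A * B, and consequently {a'·b'} + a' • B + b' • A + A * B = {a·b} + a • B + b • A + A * B; hence the product of cosets a + A and b + B, defined as {a·b} + a • B + b • A + A * B, does not depend on the choice of representatives a and b. -/

import Mathlib

open Pointwise

/-- A *magnitude* of a linearly ordered field `F` is an order-convex additive subgroup of `F`,
given as a set: it contains `0`, is closed under addition and negation, and is order-convex. -/
def IsMagnitude {F : Type*} [Field F] [LinearOrder F] [IsStrictOrderedRing F] (A : Set F) : Prop :=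
  (0 : F) ∈ A ∧ (∀ x ∈ A, ∀ y ∈ A, x + y ∈ A) ∧ (∀ x ∈ A, -x ∈ A) ∧
    (∀ x ∈ A, ∀ y ∈ A, ∀ z : F, x ≤ z → z ≤ y → z ∈ A)

/-- Order relation on subsets of `F`: `S ≤ T` iff every element of `S` is below some element of `T`. -/
def SetLE {F : Type*} [Field F] [LinearOrder F] [IsStrictOrderedRing F] (S T : Set F) : Prop :=
  ∀ x ∈ S, ∃ y ∈ T, x ≤ y

lemma abs_mem_of_magnitude {F : Type*} [Field F] [LinearOrder F] [IsStrictOrderedRing F] {A : Set F}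
    (hA : IsMagnitude A) {u : F} (hu : u ∈ A) : |u| ∈ A := by
  rcases abs_choice u with h | h <;> rw [h]
  · exact hu
  · exact hA.2.2.1 _ hu

lemma prod_add_prod_mem {F : Type*} [Field F] [LinearOrder F] [IsStrictOrderedRing F] {A B : Set F}
    (hA : IsMagnitude A) (hB : IsMagnitude B)
    {u v u' v' : F} (hu : u ∈ A) (hv : v ∈ B) (hu' : u' ∈ A) (hv' : v' ∈ B) :
    u * v + u' * v' ∈ A * B := by
  obtain ⟨hA0, hAadd, hAneg, hAconv⟩ := hA
  obtain ⟨hB0, hBadd, hBneg, hBconv⟩ := hB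
  have habsu : |u| ∈ A := abs_mem_of_magnitude ⟨hA0, hAadd, hAneg, hAconv⟩ hu
  have habsu' : |u'| ∈ A := abs_mem_of_magnitude ⟨hA0, hAadd, hAneg, hAconv⟩ hu'
  have habsv : |v| ∈ B := abs_mem_of_magnitude ⟨hB0, hBadd, hBneg, hBconv⟩ hv
  have habsv' : |v'| ∈ B := abs_mem_of_magnitude ⟨hB0, hBadd, hBneg, hBconv⟩ hv'
  set x := |u| + |u'| with hxdef
  have hxA : x ∈ A := hAadd _ habsu _ habsu'
  by_cases hx0 : x = 0
  · have h1 : |u| = 0 := by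
      have := abs_nonneg u; have := abs_nonneg u'; linarith [hx0]
    have h2 : |u'| = 0 := by
      have := abs_nonneg u; have := abs_nonneg u'; linarith [hx0]
    have : u * v + u' * v' = 0 * 0 := by
      rw [abs_eq_zero] at h1 h2; rw [h1, h2]; ring
    rw [this]
    exact Set.mul_mem_mul hA0 hB0
  · have hxpos : 0 < x := lt_of_le_of_ne (by positivity) (Ne.symm hx0)
    set z := (u / x) * v + (u' / x) * v' with hzdef
    have hwB : |v| + |v'| ∈ B := hBadd _ habsv _ habsv'
    have hub : |u| ≤ x := le_add_of_nonneg_right (abs_nonneg _)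
    have hub' : |u'| ≤ x := le_add_of_nonneg_left (abs_nonneg _)
    have hzbound : |z| ≤ |v| + |v'| := by
      calc |z| ≤ |(u / x) * v| + |(u' / x) * v'| := abs_add_le _ _
        _ = (|u| / x) * |v| + (|u'| / x) * |v'| := by
            rw [abs_mul, abs_mul, abs_div, abs_div, abs_of_pos hxpos]
        _ ≤ 1 * |v| + 1 * |v'| := by
            gcongr
            · exact (div_le_one hxpos).mpr hub
            · exact (div_le_one hxpos).mpr hub'
        _ = |v| + |v'| := by ring
    have hzB : z ∈ B := by
      rcases abs_le.mp hzbound with ⟨hl, hr⟩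
      exact hBconv _ (hBneg _ hwB) _ hwB z (by linarith) hr
    have heq : u * v + u' * v' = x * z := by
      rw [hzdef]; field_simp
    rw [heq]
    exact Set.mul_mem_mul hxA hzB

lemma add_prod_mem {F : Type*} [Field F] [LinearOrder F] [IsStrictOrderedRing F] {A B : Set F}
    (hA : IsMagnitude A) (hB : IsMagnitude B)
    {w u v : F} (hw : w ∈ A * B) (hu : u ∈ A) (hv : v ∈ B) :
    w + u * v ∈ A * B := by
  obtain ⟨p, hp, q, hq, rfl⟩ := hw
  exact prod_add_prod_mem hA hB hp hq hu hv

lemma coset_mul_subset {F : Type*} [Field F] [LinearOrder F] [IsStrictOrderedRing F]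
    (A B : Set F) (hA : IsMagnitude A) (hB : IsMagnitude B)
    (a a' b b' : F) (ha' : a' ∈ ({a} + A)) (hb' : b' ∈ ({b} + B)) :
    ({a' * b'} + a' • B + b' • A + A * B : Set F) ⊆ {a * b} + a • B + b • A + A * B := by
  obtain ⟨s, hs, α, hα, ha'eq⟩ := ha'
  obtain ⟨t, ht, β, hβ, hb'eq⟩ := hb'
  rw [Set.mem_singleton_iff] at hs ht
  rw [hs] at ha'eq
  rw [ht] at hb'eq
  intro zz hzz
  obtain ⟨t3, ht3, w, hw, rfl⟩ := hzz
  obtain ⟨t2, ht2, r, hr, rfl⟩ := ht3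
  obtain ⟨p, hp, q, hq, rfl⟩ := ht2
  rw [Set.mem_singleton_iff] at hp
  subst hp
  obtain ⟨y, hy, rfl⟩ := hq
  obtain ⟨x, hx, rfl⟩ := hr
  obtain ⟨u, hu, v, hv, rfl⟩ := hw
  have ha'eq2 : a + α = a' := ha'eq
  have hb'eq2 : b + β = b' := hb'eq
  show a' * b' + a' • y + b' • x + u * v ∈ {a * b} + a • B + b • A + A * B
  have key : a' * b' + a' • y + b' • x + u * v
      = a * b + a • (β + y) + b • (α + x) + (α * β + (α * y + (β * x + u * v))) := by
    rw [← ha'eq2, ← hb'eq2]; simp only [smul_eq_mul]; ring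
  rw [key]
  refine Set.add_mem_add (Set.add_mem_add (Set.add_mem_add rfl ?_) ?_) ?_
  · exact ⟨β + y, hB.2.1 _ hβ _ hy, rfl⟩
  · exact ⟨α + x, hA.2.1 _ hα _ hx, rfl⟩
  · have h1 : β * x + u * v ∈ A * B := by
      have : x * β + u * v ∈ A * B := prod_add_prod_mem hA hB hx hβ hu hv
      rwa [mul_comm x β] at this
    have h2 : α * y + (β * x + u * v) ∈ A * B := by
      obtain ⟨p, hp, q, hq, heq⟩ := h1
      rw [← heq]
      exact prod_add_prod_mem hA hB hα hy hp hq
    obtain ⟨p, hp, q, hq, heq⟩ := h2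
    rw [← heq]
    exact prod_add_prod_mem hA hB hα hβ hp hq

theorem coset_mul_well_defined {F : Type*} [Field F] [LinearOrder F] [IsStrictOrderedRing F]
    (A B : Set F) (hA : IsMagnitude A) (hB : IsMagnitude B)
    (a a' b b' : F) (ha' : a' ∈ ({a} + A)) (hb' : b' ∈ ({b} + B)) :
    a' * b' - a * b ∈ a • B + b • A + A * B ∧
      {a' * b'} + a' • B + b' • A + A * B = {a * b} + a • B + b • A + A * B := by
  obtain ⟨s, hs, α, hα, ha'eq⟩ := ha'
  obtain ⟨t, ht, β, hβ, hb'eq⟩ := hb'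
  rw [Set.mem_singleton_iff] at hs ht
  rw [hs] at ha'eq
  rw [ht] at hb'eq
  have ha'eq2 : a + α = a' := ha'eq
  have hb'eq2 : b + β = b' := hb'eq
  constructor
  · have key : a' * b' - a * b = a • β + b • α + α * β := by
      rw [← ha'eq2, ← hb'eq2]; simp only [smul_eq_mul]; ring
    rw [key]
    exact Set.add_mem_add (Set.add_mem_add ⟨β, hβ, rfl⟩ ⟨α, hα, rfl⟩)
      (Set.mul_mem_mul hα hβ)
  · apply Set.Subset.antisymm
    · exact coset_mul_subset A B hA hB a a' b b' ⟨a, rfl, α, hα, ha'eq⟩ ⟨b, rfl, β, hβ, hb'eq⟩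
    · refine coset_mul_subset A B hA hB a' a b' b ⟨a', rfl, -α, hA.2.2.1 _ hα, ?_⟩
        ⟨b', rfl, -β, hB.2.2.1 _ hβ, ?_⟩
      · show a' + -α = a
        rw [← ha'eq2]; ring
      · show b' + -β = b
        rw [← hb'eq2]; ring
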